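/- Fix β ∈ ℝᵖ and τ ∈ ℝᵖ, and let v = A + Σⱼ τⱼβⱼ (A ∘ Xⱼ) ∈ ℝⁿ. Then ψ₀ = 0 is a global minimizer of the function ψ₀ ↦ Q(β₁,…,β_p, ψ₀, τ₁,…,τ_p) if and only if |(1/n)·vᵀW R₍₋A₎| ≤ λ(1−α), where vᵀW R₍₋A₎ = Σᵢ wᵢ vᵢ (R₍₋A₎)ᵢ. -/

import Mathlib

/-- Soft-thresholding operator `S(x, u) = sign(x) · (|x| − u)₊`. -/
noncomputable def softThresh (x u : ℝ) : ℝ := Real.sign x * max (|x| - u) 0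

/-- Reparametrized weighted loss
`L*(θ) = (1/(2n)) Σᵢ wᵢ (Yᵢ − ψ₀Aᵢ − Σⱼ Xᵢⱼβⱼ − Σⱼ ψ₀τⱼβⱼ AᵢXᵢⱼ)²`. -/
noncomputable def Lstar (n p : ℕ) (Y A : Fin n → ℝ) (X : Fin n → Fin p → ℝ)
    (w : Fin n → ℝ) (β : Fin p → ℝ) (ψ0 : ℝ) (τ : Fin p → ℝ) : ℝ :=
  1 / (2 * (n : ℝ)) * ∑ i, w i *
    (Y i - ψ0 * A i - (∑ j, X i j * β j) - ∑ j, ψ0 * τ j * β j * A i * X i j) ^ 2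

/-- Penalized objective
`Q(θ) = L*(θ) + λ(1−α)(Σⱼ|βⱼ| + |ψ₀|) + λα Σⱼ|τⱼ|`. -/
noncomputable def Qobj (n p : ℕ) (Y A : Fin n → ℝ) (X : Fin n → Fin p → ℝ)
    (w : Fin n → ℝ) (lam alpha : ℝ) (β : Fin p → ℝ) (ψ0 : ℝ) (τ : Fin p → ℝ) : ℝ :=
  Lstar n p Y A X w β ψ0 τ
    + lam * (1 - alpha) * ((∑ j, |β j|) + |ψ0|) + lam * alpha * ∑ j, |τ j|

/-- With `β`, `τ` fixed and `v = A + Σⱼ τⱼβⱼ (A ∘ Xⱼ)`, `ψ₀ = 0` is a global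
minimizer of `ψ₀ ↦ Q(β, ψ₀, τ)` iff `|(1/n)·vᵀW R₍₋A₎| ≤ λ(1−α)`. -/
theorem stmt6 (n p : ℕ) (hn : 1 ≤ n) (Y A : Fin n → ℝ) (X : Fin n → Fin p → ℝ)
    (w : Fin n → ℝ) (hw : ∀ i, 0 ≤ w i) (hA : ∀ i, A i = 0 ∨ A i = 1)
    (lam alpha : ℝ) (hlam : 0 ≤ lam) (halpha : 0 < alpha ∧ alpha < 1)
    (β τ : Fin p → ℝ)
    (v : Fin n → ℝ) (hv : v = fun i => A i + ∑ j, τ j * β j * A i * X i j) :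
    let RA : Fin n → ℝ := fun i => Y i - ∑ j, X i j * β j
    let f : ℝ → ℝ := fun t => Qobj n p Y A X w lam alpha β t τ
    (∀ t : ℝ, f 0 ≤ f t) ↔
      |1 / (n : ℝ) * ∑ i, w i * v i * RA i| ≤ lam * (1 - alpha) := by
  intro RA f
  have hn0 : (0:ℝ) < (n:ℝ) := by exact_mod_cast hn
  set C : ℝ := 1 / (2 * (n : ℝ)) * ∑ i, w i * (v i) ^ 2 with hC_def
  set g : ℝ := 1 / (n : ℝ) * ∑ i, w i * v i * RA i with hg_def
  set L : ℝ := lam * (1 - alpha) with hL_def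
  have hC : 0 ≤ C := by
    apply mul_nonneg (by positivity)
    exact Finset.sum_nonneg fun i _ => mul_nonneg (hw i) (sq_nonneg _)
  have hL : 0 ≤ L := mul_nonneg hlam (by linarith [halpha.2])
  have hinner : ∀ (t : ℝ) (i : Fin n),
      Y i - t * A i - (∑ j, X i j * β j) - ∑ j, t * τ j * β j * A i * X i j
        = RA i - t * v i := by
    intro t i
    have : (∑ j, t * τ j * β j * A i * X i j) = t * ∑ j, τ j * β j * A i * X i j := by
      rw [Finset.mul_sum]; exact Finset.sum_congr rfl fun j _ => by ring
    rw [this, hv]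
    simp only [RA]
    ring
  have hsq : ∀ t : ℝ, (∑ i, w i * (RA i - t * v i) ^ 2)
      = (∑ i, w i * (RA i) ^ 2) - 2 * t * (∑ i, w i * v i * RA i)
        + t ^ 2 * (∑ i, w i * (v i) ^ 2) := by
    intro t
    rw [Finset.mul_sum, Finset.mul_sum, ← Finset.sum_sub_distrib, ← Finset.sum_add_distrib]
    exact Finset.sum_congr rfl fun i _ => by ring
  have key : ∀ t : ℝ, f t = f 0 + (C * t ^ 2 - g * t + L * |t|) := by
    intro t
    simp only [f, Qobj, Lstar]
    have h1 : ∀ i : Fin n,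
        Y i - t * A i - (∑ j, X i j * β j) - ∑ j, t * τ j * β j * A i * X i j
          = RA i - t * v i := hinner t
    have h0 : ∀ i : Fin n,
        Y i - 0 * A i - (∑ j, X i j * β j) - ∑ j, 0 * τ j * β j * A i * X i j
          = RA i - 0 * v i := hinner 0
    have e1 : (∑ i, w i * (Y i - t * A i - (∑ j, X i j * β j)
        - ∑ j, t * τ j * β j * A i * X i j) ^ 2)
        = ∑ i, w i * (RA i - t * v i) ^ 2 :=
      Finset.sum_congr rfl fun i _ => by rw [h1 i]
    have e0 : (∑ i, w i * (Y i - 0 * A i - (∑ j, X i j * β j)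
        - ∑ j, 0 * τ j * β j * A i * X i j) ^ 2)
        = ∑ i, w i * (RA i - 0 * v i) ^ 2 :=
      Finset.sum_congr rfl fun i _ => by rw [h0 i]
    rw [e1, e0]
    simp only [zero_mul, sub_zero, abs_zero, add_zero]
    rw [hsq t]
    simp only [hC_def, hg_def, hL_def]
    field_simp
    ring
  have hiff : (∀ t : ℝ, f 0 ≤ f t) ↔ (∀ t : ℝ, 0 ≤ C * t ^ 2 - g * t + L * |t|) := by
    constructor
    · intro h t; have := h t; rw [key t] at this; linarith
    · intro h t; rw [key t]; linarith [h t]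
  rw [hiff]
  constructor
  · intro h
    apply le_of_forall_pos_le_add
    intro η hη
    set ε : ℝ := η / (C + 1) with hε_def
    have hC1 : (0:ℝ) < C + 1 := by linarith
    have hε : 0 < ε := div_pos hη hC1
    have hkey : |g| * ε ≤ L * ε + C * ε ^ 2 := by
      by_cases hg : 0 ≤ g
      · have := h ε
        rw [abs_of_nonneg (le_of_lt hε)] at this
        rw [abs_of_nonneg hg]
        nlinarith
      · have := h (-ε)
        rw [abs_neg, abs_of_nonneg (le_of_lt hε)] at this
        rw [abs_of_neg (lt_of_not_ge hg)]
        nlinarith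
    have h2 : |g| ≤ L + C * ε := by
      have := (mul_le_mul_iff_left₀ hε).mp (by nlinarith : |g| * ε ≤ (L + C * ε) * ε)
      exact this
    have h3 : C * ε ≤ η := by
      rw [hε_def]
      have : C * (η / (C + 1)) = C * η / (C + 1) := by ring
      rw [this, div_le_iff₀ hC1]
      nlinarith
    linarith
  · intro hg t
    have h1 : g * t ≤ |g| * |t| := by
      calc g * t ≤ |g * t| := le_abs_self _
        _ = |g| * |t| := abs_mul g t
    have h2 : |g| * |t| ≤ L * |t| := mul_le_mul_of_nonneg_right hg (abs_nonneg t)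
    have h3 : 0 ≤ C * t ^ 2 := mul_nonneg hC (sq_nonneg t)
    linarith
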